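/- For the desingularised system linearised at (u_H, w_H) = (1/β, 1 − 1/β), the equilibrium is a saddle for 0 < c < c₁(β), and has two eigenvalues with positive real part for c > c₁(β), where c₁(β) = √(β−1)/β; moreover the eigenvalues are non-real exactly when c > c₂(α,β) = 2√α(β−1)/√(β(4αβ(β−1) − 1)) (when this quantity is real). -/

import Mathlib

set_option maxHeartbeats 1000000 in
/-- Linearisation of the desingularised system at the healed state `(1/β, 1 − 1/β)`:
it is a saddle (negative Jacobian determinant) for `0 < c < c₁(β)`, has two eigenvalues
with positive real part (positive determinant and positive trace) for `c > c₁(β)`,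
where `c₁(β) = √(β−1)/β`; and (when `c₂(α,β)` is real, i.e. `4αβ(β−1) − 1 > 0`) the
eigenvalues are non-real (negative discriminant) exactly when `c > c₂(α,β)`. -/
theorem healed_state_classification (α β c : ℝ) (hα : 0 < α) (hβ : 1 < β) (hc : 0 < c) :
    let f : ℝ → ℝ → ℝ := fun u w => 1 - u - w
    let Fu : ℝ → ℝ → ℝ := fun u w => -u * f u w * (c ^ 2 + u * f u (2 * w)) / c
    let Fw : ℝ → ℝ → ℝ := fun u w => u * w * f u w * f (2 * u) w / c - α * c * w * (β * u - 1)
    let uH : ℝ := 1 / β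
    let wH : ℝ := 1 - 1 / β
    let a11 := deriv (fun u => Fu u wH) uH
    let a12 := deriv (fun w => Fu uH w) wH
    let a21 := deriv (fun u => Fw u wH) uH
    let a22 := deriv (fun w => Fw uH w) wH
    let det := a11 * a22 - a12 * a21
    let tr := a11 + a22
    (c < Real.sqrt (β - 1) / β → det < 0) ∧
    (Real.sqrt (β - 1) / β < c → 0 < det ∧ 0 < tr) ∧
    (1 / (4 * β * (β - 1)) < α →
      (tr ^ 2 - 4 * det < 0 ↔
        2 * Real.sqrt α * (β - 1) / Real.sqrt (β * (4 * α * β * (β - 1) - 1)) < c)) := by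
  intro f Fu Fw uH wH a11 a12 a21 a22 det tr
  have hb0 : (0:ℝ) < β := lt_trans one_pos hβ
  have hb1 : (0:ℝ) < β - 1 := by linarith
  have hbne : β ≠ 0 := ne_of_gt hb0
  have hcne : c ≠ 0 := ne_of_gt hc
  -- compute a11
  have h11 : a11 = (β^2*c^2 - (β-1))/(β^3*c) := by
    have H : HasDerivAt
        (fun u : ℝ => -u * (1 - u - (1 - 1/β)) * (c ^ 2 + u * (1 - u - 2 * (1 - 1/β))) / c)
        ((β^2*c^2 - (β-1))/(β^3*c)) (1/β) := by
      have H' := ((((hasDerivAt_id (1/β : ℝ)).neg).mul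
          (((hasDerivAt_id (1/β : ℝ)).const_sub 1).sub_const (1 - 1/β))).mul
          ((((hasDerivAt_id (1/β : ℝ)).mul
            (((hasDerivAt_id (1/β : ℝ)).const_sub 1).sub_const (2 * (1 - 1/β)))).const_add
            (c^2)))).div_const c
      refine H'.congr_deriv ?_
      simp only [id, Pi.mul_apply, Pi.neg_apply]
      field_simp
      ring
    exact H.deriv
  -- compute a12
  have h12 : a12 = (β^2*c^2 - (β-1))/(β^3*c) := by
    have x0 : ℝ := 0
    have H : HasDerivAt
        (fun w : ℝ => -(1/β) * (1 - 1/β - w) * (c ^ 2 + 1/β * (1 - 1/β - 2 * w)) / c)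
        ((β^2*c^2 - (β-1))/(β^3*c)) (1 - 1/β) := by
      have H' := ((((hasDerivAt_id ((1 - 1/β : ℝ))).const_sub (1 - 1/β)).const_mul
          (-(1/β))).mul
          (((((hasDerivAt_id ((1 - 1/β : ℝ))).const_mul 2).const_sub
            (1 - 1/β)).const_mul (1/β)).const_add (c^2))).div_const c
      refine H'.congr_deriv ?_
      simp only [id, Pi.mul_apply, Pi.neg_apply]
      field_simp
      ring
    exact H.deriv
  -- compute a21
  have h21 : a21 = (β-1)*(1 - α*β^3*c^2)/(β^3*c) := by
    have H : HasDerivAt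
        (fun u : ℝ => u * (1 - 1/β) * (1 - u - (1 - 1/β)) * (1 - 2 * u - (1 - 1/β)) / c
          - α * c * (1 - 1/β) * (β * u - 1))
        ((β-1)*(1 - α*β^3*c^2)/(β^3*c)) (1/β) := by
      have H' := (((((hasDerivAt_id (1/β : ℝ)).mul_const (1 - 1/β)).mul
          (((hasDerivAt_id (1/β : ℝ)).const_sub 1).sub_const (1 - 1/β))).mul
          ((((hasDerivAt_id (1/β : ℝ)).const_mul 2).const_sub 1).sub_const
            (1 - 1/β))).div_const c).sub
          ((((hasDerivAt_id (1/β : ℝ)).const_mul β).sub_const 1).const_mul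
            (α * c * (1 - 1/β)))
      refine H'.congr_deriv ?_
      simp only [id, Pi.mul_apply, Pi.neg_apply]
      field_simp
      ring
    exact H.deriv
  -- compute a22
  have h22 : a22 = (β-1)/(β^3*c) := by
    have H : HasDerivAt
        (fun w : ℝ => 1/β * w * (1 - 1/β - w) * (1 - 2 * (1/β) - w) / c
          - α * c * w * (β * (1/β) - 1))
        ((β-1)/(β^3*c)) (1 - 1/β) := by
      have H' := (((((hasDerivAt_id ((1 - 1/β : ℝ))).const_mul (1/β)).mul
          ((hasDerivAt_id ((1 - 1/β : ℝ))).const_sub (1 - 1/β))).mul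
          ((hasDerivAt_id ((1 - 1/β : ℝ))).const_sub (1 - 2 * (1/β)))).div_const c).sub
          (((hasDerivAt_id ((1 - 1/β : ℝ))).const_mul (α * c)).mul_const (β * (1/β) - 1))
      refine H'.congr_deriv ?_
      simp only [id, Pi.mul_apply, Pi.neg_apply]
      field_simp
      ring
    exact H.deriv
  have hdet : det = α*(β-1)*(β^2*c^2 - (β-1))/β^3 := by
    show a11 * a22 - a12 * a21 = _
    rw [h11, h12, h21, h22]
    field_simp
    ring
  have htr : tr = c/β := by
    show a11 + a22 = _
    rw [h11, h22]
    field_simp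
    ring
  refine ⟨?_, ?_, ?_⟩
  · intro h
    have h1 : c * β < Real.sqrt (β - 1) := (lt_div_iff₀ hb0).mp h
    have h2 : (c * β)^2 < β - 1 := (Real.lt_sqrt (by positivity)).mp h1
    rw [hdet]
    apply div_neg_of_neg_of_pos _ (by positivity)
    have : β^2*c^2 - (β-1) < 0 := by nlinarith
    nlinarith [mul_pos hα hb1]
  · intro h
    have h1 : Real.sqrt (β - 1) < c * β := (div_lt_iff₀ hb0).mp h
    have h2 : β - 1 < (c * β)^2 :=
      (Real.sqrt_lt' (show (0:ℝ) < c * β by positivity)).mp h1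
    constructor
    · rw [hdet]
      apply div_pos _ (by positivity)
      have : 0 < β^2*c^2 - (β-1) := by nlinarith
      nlinarith [mul_pos hα hb1]
    · rw [htr]; positivity
  · intro hα2
    have hD : (0:ℝ) < 4 * α * β * (β - 1) - 1 := by
      have := (div_lt_iff₀ (show (0:ℝ) < 4 * β * (β - 1) by positivity)).mp hα2
      nlinarith
    have hβD : (0:ℝ) < β * (4 * α * β * (β - 1) - 1) := mul_pos hb0 hD
    have hdisc : tr^2 - 4*det
        = (4*α*(β-1)^2 - c^2*(β*(4*α*β*(β-1)-1)))/β^3 := by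
      rw [hdet, htr]
      field_simp
      ring
    have hc2sq : (2 * Real.sqrt α * (β - 1) / Real.sqrt (β * (4 * α * β * (β - 1) - 1)))^2
        = 4*α*(β-1)^2 / (β * (4 * α * β * (β - 1) - 1)) := by
      rw [div_pow, mul_pow, mul_pow, Real.sq_sqrt hα.le, Real.sq_sqrt hβD.le]
      ring
    have hc2nn : 0 ≤ 2 * Real.sqrt α * (β - 1) / Real.sqrt (β * (4 * α * β * (β - 1) - 1)) := by
      positivity
    constructor
    · intro h
      rw [hdisc] at h
      have hnum : 4*α*(β-1)^2 - c^2*(β*(4*α*β*(β-1)-1)) < 0 := by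
        by_contra hcon
        push_neg at hcon
        have : 0 ≤ (4*α*(β-1)^2 - c^2*(β*(4*α*β*(β-1)-1)))/β^3 := by positivity
        linarith
      have hsq : (2 * Real.sqrt α * (β - 1) / Real.sqrt (β * (4 * α * β * (β - 1) - 1)))^2
          < c^2 := by
        rw [hc2sq, div_lt_iff₀ hβD]
        linarith
      exact lt_of_pow_lt_pow_left₀ 2 hc.le hsq
    · intro h
      have hsq : (2 * Real.sqrt α * (β - 1) / Real.sqrt (β * (4 * α * β * (β - 1) - 1)))^2
          < c^2 := by
        exact pow_lt_pow_left₀ h hc2nn (by norm_num)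
      rw [hc2sq, div_lt_iff₀ hβD] at hsq
      rw [hdisc]
      apply div_neg_of_neg_of_pos _ (by positivity)
      linarith
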